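/- If instruments I (from H to H₁) and J (from H to H₂) coexist and P is a post-processing of I given by P_z = Σ_x λ_{xz} I_x where λ_{xz} ∈ [0,1] with Σ_z λ_{xz} = 1 for every x, then P and J coexist. -/

import Mathlib

open Matrix BigOperators
open scoped ComplexOrder Kronecker

noncomputable section

/-- Square matrices over ℂ indexed by `ι`, modelling `L(H)` for a f.d. Hilbert space. -/
abbrev Mat (ι : Type) := Matrix ι ι ℂ

/-- The extension `Φ ⊗ id_k` of a linear map on matrices. -/
def cpExt {ι κ : Type} [Fintype ι] [Fintype κ]
    (Φ : Mat ι →ₗ[ℂ] Mat κ) (k : ℕ)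
    (A : Mat (ι × Fin k)) : Mat (κ × Fin k) :=
  Matrix.of fun x y => Φ (Matrix.of fun p q => A (p, x.2) (q, y.2)) x.1 y.1

/-- Complete positivity. -/
def IsCP {ι κ : Type} [Fintype ι] [Fintype κ] (Φ : Mat ι →ₗ[ℂ] Mat κ) : Prop :=
  ∀ (k : ℕ) (A : Mat (ι × Fin k)), A.PosSemidef → (cpExt Φ k A).PosSemidef

/-- Trace non-increasing (on positive operators). -/
def IsTNI {ι κ : Type} [Fintype ι] [Fintype κ] (Φ : Mat ι →ₗ[ℂ] Mat κ) : Prop :=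
  ∀ A : Mat ι, A.PosSemidef → (Φ A).trace ≤ A.trace

/-- An operation: completely positive and trace non-increasing. -/
def IsOperation {ι κ : Type} [Fintype ι] [Fintype κ] (Φ : Mat ι →ₗ[ℂ] Mat κ) : Prop :=
  IsCP Φ ∧ IsTNI Φ

/-- A channel: completely positive and trace preserving. -/
def IsChannel {ι κ : Type} [Fintype ι] [Fintype κ] (Φ : Mat ι →ₗ[ℂ] Mat κ) : Prop :=
  IsCP Φ ∧ ∀ A : Mat ι, (Φ A).trace = A.trace

/-- A state (density operator). -/
def IsState {ι : Type} [Fintype ι] (ρ : Mat ι) : Prop :=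
  ρ.PosSemidef ∧ ρ.trace = 1

/-- `Ψ` is the dual of `Φ`: `tr[B Ψ(A)] = tr[Φ(B) A]`. -/
def IsDual {ι κ : Type} [Fintype ι] [Fintype κ]
    (Φ : Mat ι →ₗ[ℂ] Mat κ) (Ψ : Mat κ →ₗ[ℂ] Mat ι) : Prop :=
  ∀ (B : Mat ι) (A : Mat κ), (B * Ψ A).trace = (Φ B * A).trace

/-- Partial trace over the second factor. -/
def ptraceR {ι κ : Type} [Fintype κ] (A : Mat (ι × κ)) : Mat ι :=
  Matrix.of fun i j => ∑ b, A (i, b) (j, b)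

/-- Partial trace over the first factor. -/
def ptraceL {ι κ : Type} [Fintype ι] (A : Mat (ι × κ)) : Mat κ :=
  Matrix.of fun a b => ∑ i, A (i, a) (i, b)

/-- A (finite) instrument: each component is an operation and the sum is trace preserving. -/
def IsInstrument {ι κ Ω : Type} [Fintype ι] [Fintype κ] [Fintype Ω]
    (I : Ω → (Mat ι →ₗ[ℂ] Mat κ)) : Prop :=
  (∀ x, IsCP (I x)) ∧ (∀ x, IsTNI (I x)) ∧ ∀ A : Mat ι, (∑ x, I x A).trace = A.trace

/-- Coexistence of two instruments with common input space. -/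
def Coexist {ι κ₁ κ₂ Ω₁ Ω₂ : Type} [Fintype ι] [Fintype κ₁] [Fintype κ₂]
    [Fintype Ω₁] [Fintype Ω₂]
    (I : Ω₁ → (Mat ι →ₗ[ℂ] Mat κ₁)) (J : Ω₂ → (Mat ι →ₗ[ℂ] Mat κ₂)) : Prop :=
  ∃ K : Ω₁ × Ω₂ → (Mat ι →ₗ[ℂ] Mat (κ₁ × κ₂)),
    IsInstrument K ∧
    (∀ x ρ, IsState ρ → ∑ y, ptraceR (K (x, y) ρ) = I x ρ) ∧
    (∀ y ρ, IsState ρ → ∑ x, ptraceL (K (x, y) ρ) = J y ρ)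

section Aux

variable {ι κ : Type} [Fintype ι] [Fintype κ]

lemma psd_smul_real {A : Mat ι} (hA : A.PosSemidef) {c : ℝ} (hc : 0 ≤ c) :
    ((c : ℂ) • A).PosSemidef := by
  refine Matrix.PosSemidef.of_dotProduct_mulVec_nonneg ?_ ?_
  · have := hA.1
    unfold Matrix.IsHermitian at *
    rw [Matrix.conjTranspose_smul, this]
    simp [Complex.conj_ofReal]
  · intro x
    rw [Matrix.smul_mulVec, dotProduct_smul, smul_eq_mul]
    exact mul_nonneg (by exact_mod_cast hc) (hA.dotProduct_mulVec_nonneg x)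

lemma psd_trace_nonneg [DecidableEq ι] {A : Mat ι} (hA : A.PosSemidef) :
    0 ≤ A.trace := by
  rw [Matrix.trace]
  refine Finset.sum_nonneg fun i _ => ?_
  have := hA.dotProduct_mulVec_nonneg (Pi.single i 1)
  simpa [Matrix.mulVec_single, dotProduct, Pi.single_apply, Matrix.diag] using this

lemma cpExt_smul (Φ : Mat ι →ₗ[ℂ] Mat κ) (c : ℂ) (k : ℕ) (A : Mat (ι × Fin k)) :
    cpExt (c • Φ) k A = c • cpExt Φ k A := by
  ext x y
  simp [cpExt]

lemma cpExt_sum {Ω : Type} (s : Finset Ω) (Φ : Ω → (Mat ι →ₗ[ℂ] Mat κ)) (k : ℕ)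
    (A : Mat (ι × Fin k)) :
    cpExt (∑ x ∈ s, Φ x) k A = ∑ x ∈ s, cpExt (Φ x) k A := by
  ext x y
  simp [cpExt, Matrix.sum_apply]

lemma psd_sum {Ω : Type} (s : Finset Ω) (f : Ω → Mat κ)
    (h : ∀ x ∈ s, (f x).PosSemidef) : (∑ x ∈ s, f x).PosSemidef := by
  classical
  induction s using Finset.induction with
  | empty => simpa using Matrix.PosSemidef.zero
  | insert _ _ hx ih =>
    rw [Finset.sum_insert hx]
    exact Matrix.PosSemidef.add (h _ (Finset.mem_insert_self _ _))
      (ih fun x hxs => h x (Finset.mem_insert_of_mem hxs))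

lemma isCP_combo {Ω : Type} [Fintype Ω] (Φ : Ω → (Mat ι →ₗ[ℂ] Mat κ))
    (hΦ : ∀ x, IsCP (Φ x)) (c : Ω → ℝ) (hc : ∀ x, 0 ≤ c x) :
    IsCP (∑ x, (c x : ℂ) • Φ x) := by
  intro k A hA
  rw [cpExt_sum]
  refine psd_sum _ _ fun x _ => ?_
  rw [cpExt_smul]
  exact psd_smul_real (hΦ x k A hA) (hc x)

/-- A CP map sends PSD matrices to PSD matrices (the `k = 1` case). -/
lemma isCP_posSemidef (Φ : Mat ι →ₗ[ℂ] Mat κ) (hΦ : IsCP Φ)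
    {A : Mat ι} (hA : A.PosSemidef) : (Φ A).PosSemidef := by
  have h1 : (A.submatrix (Prod.fst : ι × Fin 1 → ι) Prod.fst).PosSemidef :=
    hA.submatrix _
  have h2 := hΦ 1 _ h1
  have h3 : Φ A = (cpExt Φ 1 (A.submatrix Prod.fst Prod.fst)).submatrix
      (fun a : κ => (a, (0 : Fin 1))) (fun a => (a, 0)) := rfl
  rw [h3]
  exact h2.submatrix _

lemma ptraceR_sum {Ω : Type} (s : Finset Ω) (f : Ω → Mat (ι × κ)) :
    ptraceR (∑ x ∈ s, f x) = ∑ x ∈ s, ptraceR (f x) := by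
  ext i j
  simp only [ptraceR, Matrix.sum_apply, Matrix.of_apply]
  rw [Finset.sum_comm]

lemma ptraceR_smul (c : ℂ) (A : Mat (ι × κ)) :
    ptraceR (c • A) = c • ptraceR A := by
  ext i j
  simp [ptraceR, Finset.mul_sum]

lemma ptraceL_sum {Ω : Type} (s : Finset Ω) (f : Ω → Mat (ι × κ)) :
    ptraceL (∑ x ∈ s, f x) = ∑ x ∈ s, ptraceL (f x) := by
  ext a b
  simp only [ptraceL, Matrix.sum_apply, Matrix.of_apply]
  rw [Finset.sum_comm]

lemma ptraceL_smul (c : ℂ) (A : Mat (ι × κ)) :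
    ptraceL (c • A) = c • ptraceL A := by
  ext a b
  simp [ptraceL, Finset.mul_sum]

end Aux

theorem post_processing_coexists {ι κ₁ κ₂ Ω₁ Ω₂ Ω₃ : Type}
    [Fintype ι] [DecidableEq ι] [Fintype κ₁] [DecidableEq κ₁]
    [Fintype κ₂] [DecidableEq κ₂] [Fintype Ω₁] [Fintype Ω₂] [Fintype Ω₃]
    (I : Ω₁ → (Mat ι →ₗ[ℂ] Mat κ₁)) (J : Ω₂ → (Mat ι →ₗ[ℂ] Mat κ₂))
    (hI : IsInstrument I) (hJ : IsInstrument J) (hco : Coexist I J)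
    (l : Ω₁ → Ω₃ → ℝ) (hl0 : ∀ x z, 0 ≤ l x z) (hl1 : ∀ x z, l x z ≤ 1)
    (hlsum : ∀ x, ∑ z, l x z = 1)
    (P : Ω₃ → (Mat ι →ₗ[ℂ] Mat κ₁))
    (hP : ∀ z, P z = ∑ x, (l x z : ℂ) • I x) :
    Coexist P J := by
  obtain ⟨K, ⟨hKcp, hKtni, hKtr⟩, hKI, hKJ⟩ := hco
  refine ⟨fun zy => ∑ x, (l x zy.1 : ℂ) • K (x, zy.2), ⟨?_, ?_, ?_⟩, ?_, ?_⟩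
  · intro zy
    exact isCP_combo _ (fun x => hKcp (x, zy.2)) _ (fun x => hl0 x zy.1)
  · -- trace non-increasing
    intro zy A hA
    simp only [LinearMap.sum_apply, LinearMap.smul_apply]
    rw [Matrix.trace_sum]
    have hpsd : ∀ p : Ω₁ × Ω₂, (K p A).PosSemidef := fun p =>
      isCP_posSemidef _ (hKcp p) hA
    have htr0 : ∀ p : Ω₁ × Ω₂, 0 ≤ (K p A).trace := fun p =>
      psd_trace_nonneg (hpsd p)
    calc ∑ x, ((l x zy.1 : ℂ) • K (x, zy.2) A).trace
        ≤ ∑ x, (K (x, zy.2) A).trace := by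
          refine Finset.sum_le_sum fun x _ => ?_
          rw [Matrix.trace_smul, smul_eq_mul]
          calc (l x zy.1 : ℂ) * (K (x, zy.2) A).trace
              ≤ 1 * (K (x, zy.2) A).trace := by
                refine mul_le_mul_of_nonneg_right ?_ (htr0 _)
                exact_mod_cast hl1 x zy.1
            _ = (K (x, zy.2) A).trace := one_mul _
      _ ≤ ∑ p : Ω₁ × Ω₂, (K p A).trace := by
          rw [Fintype.sum_prod_type]
          refine Finset.sum_le_sum fun x _ => ?_
          exact Finset.single_le_sum (fun y _ => htr0 (x, y))
            (Finset.mem_univ zy.2)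
      _ = A.trace := by rw [← Matrix.trace_sum]; exact hKtr A
  · -- trace preserving sum
    intro A
    have : ∑ p : Ω₃ × Ω₂, (∑ x, (l x p.1 : ℂ) • K (x, p.2)) A
        = ∑ p : Ω₁ × Ω₂, K p A := by
      simp only [LinearMap.sum_apply, LinearMap.smul_apply]
      rw [Fintype.sum_prod_type, Fintype.sum_prod_type]
      conv_lhs => rw [Finset.sum_comm]
      conv_rhs => rw [Finset.sum_comm]
      refine Finset.sum_congr rfl fun y _ => ?_
      rw [Finset.sum_comm]
      refine Finset.sum_congr rfl fun x _ => ?_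
      show ∑ z, (l x z : ℂ) • K (x, y) A = K (x, y) A
      rw [← Finset.sum_smul]
      have : (∑ z, (l x z : ℂ)) = 1 := by
        rw [← Complex.ofReal_sum, hlsum x, Complex.ofReal_one]
      rw [this, one_smul]
    rw [this]
    exact hKtr A
  · -- first marginal
    intro z ρ hρ
    rw [hP z]
    simp only [LinearMap.sum_apply, LinearMap.smul_apply, ptraceR_sum, ptraceR_smul]
    rw [Finset.sum_comm]
    refine Finset.sum_congr rfl fun x _ => ?_
    rw [← Finset.smul_sum, hKI x ρ hρ]
  · -- second marginal
    intro y ρ hρ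
    rw [← hKJ y ρ hρ]
    simp only [LinearMap.sum_apply, LinearMap.smul_apply, ptraceL_sum, ptraceL_smul]
    rw [Finset.sum_comm]
    refine Finset.sum_congr rfl fun x _ => ?_
    rw [← Finset.sum_smul]
    have : (∑ z, (l x z : ℂ)) = 1 := by
      rw [← Complex.ofReal_sum, hlsum x, Complex.ofReal_one]
    rw [this, one_smul]
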